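/- For every n ≥ 1, full-rank lattice L ⊆ ℝⁿ, s > 0, and x ∈ ℝⁿ: s² · (1 − ρ_s(L − x)/ρ_s(L)) ≤ π · dist(x, L)². -/

import Mathlib

open Metric Submodule
noncomputable section

/-- The Gaussian mass `ρ_s(A) = Σ_{a ∈ A} exp(−π‖a/s‖²)` of a set `A`. -/
def gMass {E : Type*} [NormedAddCommGroup E] (s : ℝ) (A : Set E) : ℝ :=
  ∑' a : A, Real.exp (-Real.pi * (‖(a : E)‖ / s) ^ 2)

lemma sumZ_aux {c : ℝ} (hc : 0 < c) : Summable fun k : ℤ => Real.exp (-c * (k : ℝ) ^ 2) := by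
  have hr : Real.exp (-c) < 1 := Real.exp_lt_one_iff.mpr (by linarith)
  have hr0 : (0:ℝ) ≤ Real.exp (-c) := (Real.exp_pos _).le
  have key : ∀ k : ℤ, Real.exp (-c * (k : ℝ) ^ 2) ≤ Real.exp (-c) ^ k.natAbs := by
    intro k
    rw [← Real.exp_nat_mul]
    apply Real.exp_le_exp.mpr
    have : ((k.natAbs : ℝ)) ≤ (k : ℝ) ^ 2 := by
      have h1 : ((k.natAbs : ℝ)) = |(k : ℝ)| := by
        rw [Nat.cast_natAbs]; simp
      have h2 : (k.natAbs : ℝ) ≤ (k.natAbs : ℝ) ^ 2 := by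
        exact_mod_cast Nat.le_self_pow two_ne_zero _
      have h3 : ((k : ℝ)) ^ 2 = (k.natAbs : ℝ) ^ 2 := by rw [h1, sq_abs]
      linarith
    nlinarith
  apply Summable.of_nonneg_of_le (fun k => (Real.exp_pos _).le) key
  apply Summable.of_nat_of_neg <;> simpa using summable_geometric_of_lt_one hr0 hr

lemma sumZn_aux (n : ℕ) {c : ℝ} (hc : 0 < c) :
    Summable fun m : Fin n → ℤ => ∏ i, Real.exp (-c * (m i : ℝ) ^ 2) := by
  induction n with
  | zero => exact .of_finite
  | succ n ih =>
      have := ((sumZ_aux hc).mul_of_nonneg ih (fun k => (Real.exp_pos _).le)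
        (fun m => Finset.prod_nonneg fun i _ => (Real.exp_pos _).le))
      rw [← (Fin.consEquiv fun _ : Fin (n+1) => ℤ).summable_iff]
      convert this using 2 with m
      show ∏ i : Fin (n + 1), Real.exp (-c * ((Fin.cons m.1 m.2 : Fin (n+1) → ℤ) i : ℝ) ^ 2) = _
      rw [Fin.prod_univ_succ]
      simp

lemma summable_gauss_aux (n : ℕ)
    (L : Submodule ℤ (EuclideanSpace ℝ (Fin n))) [DiscreteTopology L]
    (hL : IsZLattice ℝ L) {c : ℝ} (hc : 0 < c) :
    Summable fun v : L => Real.exp (-c * ‖(v : EuclideanSpace ℝ (Fin n))‖ ^ 2) := by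
  have hfree : Module.Free ℤ L := ZLattice.module_free ℝ L
  have hfin : Module.Finite ℤ L := ZLattice.module_finite ℝ L
  set ι := Module.Free.ChooseBasisIndex ℤ L
  let b : Module.Basis (Fin (Fintype.card ι)) ℤ L :=
    (Module.Free.chooseBasis ℤ L).reindex (Fintype.equivFin ι)
  set N := Fintype.card ι
  let B := b.ofZLatticeBasis ℝ L
  let Tc : EuclideanSpace ℝ (Fin n) →L[ℝ] (Fin N → ℝ) :=
    LinearMap.toContinuousLinearMap (B.equivFun : _ →ₗ[ℝ] _)
  set C := ‖Tc‖ with hC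
  have hC0 : 0 ≤ C := norm_nonneg _
  set c' := c / ((N + 1) * (C + 1) ^ 2) with hc'
  have hc'0 : 0 < c' := by
    apply div_pos hc
    positivity
  have key : ∀ v : L, Real.exp (-c * ‖(v : EuclideanSpace ℝ (Fin n))‖ ^ 2)
      ≤ ∏ i, Real.exp (-c' * ((b.repr v i : ℝ)) ^ 2) := by
    intro v
    rw [← Real.exp_sum]
    apply Real.exp_le_exp.mpr
    have hsum : ∑ i, (-c' * ((b.repr v i : ℝ)) ^ 2) = -c' * ∑ i, ((b.repr v i : ℝ)) ^ 2 := by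
      rw [Finset.mul_sum]
    rw [hsum]
    have hcoord : ∀ i, Tc (v : EuclideanSpace ℝ (Fin n)) i = ((b.repr v i : ℝ)) := by
      intro i
      have h := Module.Basis.ofZLatticeBasis_repr_apply ℝ L b v i
      simp only [Tc, LinearMap.coe_toContinuousLinearMap', LinearEquiv.coe_coe,
        Module.Basis.equivFun_apply]
      exact h
    have hTc : ‖Tc (v : EuclideanSpace ℝ (Fin n))‖ ≤ C * ‖(v : EuclideanSpace ℝ (Fin n))‖ :=
      Tc.le_opNorm _
    have hbound : ∑ i, ((b.repr v i : ℝ)) ^ 2 ≤ (N + 1) * (C + 1) ^ 2 * ‖(v : EuclideanSpace ℝ (Fin n))‖ ^ 2 := by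
      have h1 : ∀ i, ((b.repr v i : ℝ)) ^ 2 ≤ (C + 1) ^ 2 * ‖(v : EuclideanSpace ℝ (Fin n))‖ ^ 2 := by
        intro i
        rw [← hcoord i]
        have h2 : |Tc (v : EuclideanSpace ℝ (Fin n)) i| ≤ ‖Tc (v : EuclideanSpace ℝ (Fin n))‖ := by
          rw [← Real.norm_eq_abs]
          exact norm_le_pi_norm _ i
        have h3 : ‖Tc (v : EuclideanSpace ℝ (Fin n))‖ ≤ (C + 1) * ‖(v : EuclideanSpace ℝ (Fin n))‖ := by
          nlinarith [norm_nonneg (v : EuclideanSpace ℝ (Fin n))]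
        have h4 : (0:ℝ) ≤ ‖Tc (v : EuclideanSpace ℝ (Fin n))‖ := norm_nonneg _
        rw [← sq_abs]
        nlinarith [abs_nonneg (Tc (v : EuclideanSpace ℝ (Fin n)) i), norm_nonneg (v : EuclideanSpace ℝ (Fin n))]
      calc ∑ i, ((b.repr v i : ℝ)) ^ 2 ≤ ∑ _i : Fin N, (C + 1) ^ 2 * ‖(v : EuclideanSpace ℝ (Fin n))‖ ^ 2 :=
            Finset.sum_le_sum fun i _ => h1 i
        _ = N * ((C + 1) ^ 2 * ‖(v : EuclideanSpace ℝ (Fin n))‖ ^ 2) := by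
            rw [Finset.sum_const, Finset.card_univ, Fintype.card_fin, nsmul_eq_mul]
        _ ≤ (N + 1) * (C + 1) ^ 2 * ‖(v : EuclideanSpace ℝ (Fin n))‖ ^ 2 := by
            have : (0:ℝ) ≤ (C + 1) ^ 2 * ‖(v : EuclideanSpace ℝ (Fin n))‖ ^ 2 := by positivity
            nlinarith [this]
    have hmul : c' * ((N + 1) * (C + 1) ^ 2) = c := by
      rw [hc', div_mul_cancel₀]
      positivity
    nlinarith [mul_le_mul_of_nonneg_left hbound hc'0.le]
  have hinj : Function.Injective (fun v : L => fun i => b.repr v i) := by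
    intro v w h
    apply b.repr.injective
    ext i
    exact congrFun h i
  have hsummable : Summable fun v : L => ∏ i, Real.exp (-c' * ((b.repr v i : ℝ)) ^ 2) := by
    have := Summable.comp_injective
      (f := fun m : Fin N → ℤ => ∏ i, Real.exp (-c' * ((m i : ℝ)) ^ 2)) (sumZn_aux N hc'0) hinj
    exact this
  exact Summable.of_nonneg_of_le (fun v => (Real.exp_pos _).le) key hsummable

set_option maxHeartbeats 1000000 in
/-- For every full-rank lattice `L ⊆ ℝⁿ`, `s > 0` and `x ∈ ℝⁿ`:
`s² · (1 − ρ_s(L − x)/ρ_s(L)) ≤ π · dist(x, L)²`. -/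
theorem gaussian_norm_le_pi_dist_sq
    (n : ℕ) (hn : 1 ≤ n)
    (L : Submodule ℤ (EuclideanSpace ℝ (Fin n))) [DiscreteTopology L]
    (hL : IsZLattice ℝ L) (s : ℝ) (hs : 0 < s) (x : EuclideanSpace ℝ (Fin n)) :
    s ^ 2 * (1 - gMass s ((fun v => v - x) '' (L : Set (EuclideanSpace ℝ (Fin n))))
        / gMass s (L : Set (EuclideanSpace ℝ (Fin n))))
      ≤ Real.pi * Metric.infDist x (L : Set (EuclideanSpace ℝ (Fin n))) ^ 2 := by
  classical
  -- closest point
  have hLclosed : IsClosed (L : Set (EuclideanSpace ℝ (Fin n))) := by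
    have hdt : DiscreteTopology (↥(L.toAddSubgroup : AddSubgroup (EuclideanSpace ℝ (Fin n)))) :=
      inferInstanceAs (DiscreteTopology L)
    have : IsClosed ((L.toAddSubgroup : AddSubgroup (EuclideanSpace ℝ (Fin n))) : Set (EuclideanSpace ℝ (Fin n))) :=
      AddSubgroup.isClosed_of_discrete
    exact this
  obtain ⟨v₀, hv₀L, hv₀⟩ := hLclosed.exists_infDist_eq_dist ⟨0, L.zero_mem⟩ x
  set d := Metric.infDist x (L : Set (EuclideanSpace ℝ (Fin n))) with hd
  set y : EuclideanSpace ℝ (Fin n) := x - v₀ with hy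
  have hyd : ‖y‖ = d := by
    rw [hy, ← dist_eq_norm]
    exact hv₀.symm
  have hd0 : 0 ≤ d := Metric.infDist_nonneg
  set G : L → ℝ := fun v => Real.exp (-Real.pi * (‖(v : EuclideanSpace ℝ (Fin n))‖ / s) ^ 2) with hG
  set F : L → ℝ := fun v => Real.exp (-Real.pi * (‖(v : EuclideanSpace ℝ (Fin n)) - y‖ / s) ^ 2) with hF
  have hexp2 : ∀ t : ℝ, -Real.pi * (t / s) ^ 2 = -(Real.pi / s ^ 2) * t ^ 2 := by
    intro t; field_simp
  have hGsum : Summable G := by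
    have := summable_gauss_aux n L hL (c := Real.pi / s ^ 2)
      (div_pos Real.pi_pos (by positivity))
    apply this.congr
    intro v
    show Real.exp (-(Real.pi / s ^ 2) * ‖(v : EuclideanSpace ℝ (Fin n))‖ ^ 2)
      = Real.exp (-Real.pi * (‖(v : EuclideanSpace ℝ (Fin n))‖ / s) ^ 2)
    rw [hexp2]
  have hFsum : Summable F := by
    have base := summable_gauss_aux n L hL (c := Real.pi / (2 * s ^ 2))
      (div_pos Real.pi_pos (by positivity))
    apply Summable.of_nonneg_of_le (fun v => (Real.exp_pos _).le) _
      (base.mul_left (Real.exp (2 * Real.pi * ‖y‖ ^ 2 / s ^ 2)))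
    intro v
    show Real.exp (-Real.pi * (‖(v : EuclideanSpace ℝ (Fin n)) - y‖ / s) ^ 2)
      ≤ Real.exp (2 * Real.pi * ‖y‖ ^ 2 / s ^ 2)
        * Real.exp (-(Real.pi / (2 * s ^ 2)) * ‖(v : EuclideanSpace ℝ (Fin n))‖ ^ 2)
    rw [← Real.exp_add]
    apply Real.exp_le_exp.mpr
    have habs : |‖(v : EuclideanSpace ℝ (Fin n))‖ - ‖y‖| ≤ ‖(v : EuclideanSpace ℝ (Fin n)) - y‖ := abs_norm_sub_norm_le _ _
    have h1 : (‖(v : EuclideanSpace ℝ (Fin n))‖ - ‖y‖) ^ 2 ≤ ‖(v : EuclideanSpace ℝ (Fin n)) - y‖ ^ 2 := by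
      rw [← sq_abs (‖(v : EuclideanSpace ℝ (Fin n))‖ - ‖y‖)]
      exact pow_le_pow_left₀ (abs_nonneg _) habs 2
    have hs2 : (0:ℝ) < s ^ 2 := by positivity
    have key2 : ‖(v : EuclideanSpace ℝ (Fin n))‖ ^ 2 / 2 - 2 * ‖y‖ ^ 2 ≤ ‖(v : EuclideanSpace ℝ (Fin n)) - y‖ ^ 2 := by
      nlinarith [sq_nonneg (‖(v : EuclideanSpace ℝ (Fin n))‖ - 2 * ‖y‖), h1]
    rw [div_pow]
    rw [show -Real.pi * (‖(v : EuclideanSpace ℝ (Fin n)) - y‖ ^ 2 / s ^ 2) = (-Real.pi * ‖(v : EuclideanSpace ℝ (Fin n)) - y‖ ^ 2) / s ^ 2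
        by ring]
    rw [show 2 * Real.pi * ‖y‖ ^ 2 / s ^ 2 + -(Real.pi / (2 * s ^ 2)) * ‖(v : EuclideanSpace ℝ (Fin n))‖ ^ 2
        = (2 * Real.pi * ‖y‖ ^ 2 - Real.pi / 2 * ‖(v : EuclideanSpace ℝ (Fin n))‖ ^ 2) / s ^ 2 by field_simp; ring]
    rw [div_le_div_iff_of_pos_right hs2]
    nlinarith [Real.pi_pos, key2]
  set T₁ := ∑' v : L, F v with hT₁
  set T₂ := ∑' v : L, G v with hT₂
  -- positivity of T₂
  have hT₂pos : 0 < T₂ := by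
    have hle : G ⟨0, L.zero_mem⟩ ≤ T₂ :=
      Summable.le_tsum hGsum _ (fun v _ => (Real.exp_pos _).le)
    have : 0 < G ⟨0, L.zero_mem⟩ := Real.exp_pos _
    linarith
  -- key inequality : exp(-π (‖y‖/s)^2) * T₂ ≤ T₁
  have hkey : Real.exp (-Real.pi * (‖y‖ / s) ^ 2) * T₂ ≤ T₁ := by
    have hnegsum : Summable fun v : L => F (-v) :=
      (Equiv.neg L).summable_iff.mpr hFsum
    have hnegeq : ∑' v : L, F (-v) = T₁ := by
      rw [hT₁]
      exact (Equiv.neg L).tsum_eq F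
    have hpoint : ∀ v : L, 2 * (Real.exp (-Real.pi * (‖y‖ / s) ^ 2) * G v) ≤ F v + F (-v) := by
      intro v
      have hpar : ‖(v : EuclideanSpace ℝ (Fin n)) + y‖ * ‖(v : EuclideanSpace ℝ (Fin n)) + y‖ + ‖(v : EuclideanSpace ℝ (Fin n)) - y‖ * ‖(v : EuclideanSpace ℝ (Fin n)) - y‖
          = 2 * (‖(v : EuclideanSpace ℝ (Fin n))‖ * ‖(v : EuclideanSpace ℝ (Fin n))‖ + ‖y‖ * ‖y‖) := by
          have := parallelogram_law_with_norm ℝ (v : EuclideanSpace ℝ (Fin n)) y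
          simp only [sq] at this; exact this
      set a := Real.pi * (‖(v : EuclideanSpace ℝ (Fin n)) - y‖ / s) ^ 2 with ha
      set b := Real.pi * (‖(v : EuclideanSpace ℝ (Fin n)) + y‖ / s) ^ 2 with hb
      have hFv : F v = Real.exp (-a) := by
        show Real.exp (-Real.pi * (‖(v : EuclideanSpace ℝ (Fin n)) - y‖ / s) ^ 2) = _
        rw [ha]; ring_nf
      have hFnv : F (-v) = Real.exp (-b) := by
        show Real.exp (-Real.pi * (‖((-v : L) : EuclideanSpace ℝ (Fin n)) - y‖ / s) ^ 2) = _
        have hco : ((-v : L) : EuclideanSpace ℝ (Fin n)) - y = -((v : EuclideanSpace ℝ (Fin n)) + y) := by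
          push_cast; abel
        rw [hco, norm_neg, hb]; ring_nf
      have hpar2 : ‖(v : EuclideanSpace ℝ (Fin n)) + y‖ ^ 2 + ‖(v : EuclideanSpace ℝ (Fin n)) - y‖ ^ 2
          = 2 * (‖(v : EuclideanSpace ℝ (Fin n))‖ ^ 2 + ‖y‖ ^ 2) := by
        simp only [sq]
        linarith [hpar]
      have hGv : Real.exp (-Real.pi * (‖y‖ / s) ^ 2) * G v = Real.exp (-((a + b) / 2)) := by
        show Real.exp (-Real.pi * (‖y‖ / s) ^ 2) * Real.exp (-Real.pi * (‖(v : EuclideanSpace ℝ (Fin n))‖ / s) ^ 2) = _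
        rw [← Real.exp_add]
        congr 1
        rw [ha, hb]
        have hs2 : s ^ 2 ≠ 0 := by positivity
        rw [div_pow, div_pow, div_pow, div_pow]
        field_simp
        linear_combination hpar2
      have hAM : 2 * Real.exp (-((a + b) / 2)) ≤ Real.exp (-a) + Real.exp (-b) := by
        have h := sq_nonneg (Real.exp (-a / 2) - Real.exp (-b / 2))
        have e1 : Real.exp (-a / 2) * Real.exp (-b / 2) = Real.exp (-((a + b) / 2)) := by
          rw [← Real.exp_add]; ring_nf
        have e2 : Real.exp (-a / 2) ^ 2 = Real.exp (-a) := by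
          rw [← Real.exp_nat_mul]; push_cast; ring_nf
        have e3 : Real.exp (-b / 2) ^ 2 = Real.exp (-b) := by
          rw [← Real.exp_nat_mul]; push_cast; ring_nf
        nlinarith [h, e1, e2, e3]
      rw [hFv, hFnv, hGv]
      linarith
    have hsum_le : ∑' v : L, 2 * (Real.exp (-Real.pi * (‖y‖ / s) ^ 2) * G v)
        ≤ ∑' v : L, (F v + F (-v)) :=
      Summable.tsum_le_tsum hpoint ((hGsum.mul_left _).mul_left 2) (hFsum.add hnegsum)
    rw [Summable.tsum_add hFsum hnegsum, hnegeq] at hsum_le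
    rw [tsum_mul_left, tsum_mul_left] at hsum_le
    rw [← hT₂] at hsum_le
    linarith
  -- identify the gaussian masses
  have hmass2 : gMass s (L : Set (EuclideanSpace ℝ (Fin n))) = T₂ := rfl
  have hmass1 : gMass s ((fun v => v - x) '' (L : Set (EuclideanSpace ℝ (Fin n)))) = T₁ := by
    have hinj : Function.Injective (fun v : EuclideanSpace ℝ (Fin n) => v - x) := fun a b h => by
      simpa using congrArg (· + x) h
    have e1 : ∑' a : ((fun v => v - x) '' (L : Set (EuclideanSpace ℝ (Fin n)))),
        Real.exp (-Real.pi * (‖(a : EuclideanSpace ℝ (Fin n))‖ / s) ^ 2)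
        = ∑' v : (L : Set (EuclideanSpace ℝ (Fin n))), Real.exp (-Real.pi * (‖(v : EuclideanSpace ℝ (Fin n)) - x‖ / s) ^ 2) := by
      rw [← (Equiv.Set.image (fun v : EuclideanSpace ℝ (Fin n) => v - x) (L : Set (EuclideanSpace ℝ (Fin n))) hinj).tsum_eq]
      rfl
    rw [gMass, e1]
    have e2 : ∑' v : L, Real.exp (-Real.pi * (‖(v : EuclideanSpace ℝ (Fin n)) - x‖ / s) ^ 2) = T₁ := by
      rw [hT₁]
      rw [← (Equiv.addRight (⟨v₀, hv₀L⟩ : L)).tsum_eq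
        (fun v : L => Real.exp (-Real.pi * (‖(v : EuclideanSpace ℝ (Fin n)) - x‖ / s) ^ 2))]
      apply tsum_congr
      intro v
      have hv : (((Equiv.addRight (⟨v₀, hv₀L⟩ : L)) v : L) : EuclideanSpace ℝ (Fin n))
          = (v : EuclideanSpace ℝ (Fin n)) + v₀ := by
        simp [Equiv.coe_addRight]
      show Real.exp (-Real.pi * (‖(((Equiv.addRight (⟨v₀, hv₀L⟩ : L)) v : L) : EuclideanSpace ℝ (Fin n)) - x‖ / s) ^ 2)
        = F v
      rw [hv]
      show _ = Real.exp (-Real.pi * (‖(v : EuclideanSpace ℝ (Fin n)) - y‖ / s) ^ 2)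
      congr 3
      rw [hy]
      abel
    exact e2
  rw [hmass1, hmass2]
  -- final arithmetic
  have hratio : Real.exp (-Real.pi * (‖y‖ / s) ^ 2) ≤ T₁ / T₂ :=
    (le_div_iff₀ hT₂pos).mpr hkey
  have hexp_ineq : 1 - Real.exp (-Real.pi * (‖y‖ / s) ^ 2) ≤ Real.pi * (‖y‖ / s) ^ 2 := by
    have := Real.add_one_le_exp (-(Real.pi * (‖y‖ / s) ^ 2))
    have h2 : -Real.pi * (‖y‖ / s) ^ 2 = -(Real.pi * (‖y‖ / s) ^ 2) := by ring
    rw [h2]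
    linarith
  have hs2 : (0:ℝ) < s ^ 2 := by positivity
  have hfinal : s ^ 2 * (1 - T₁ / T₂) ≤ s ^ 2 * (Real.pi * (‖y‖ / s) ^ 2) := by
    apply mul_le_mul_of_nonneg_left _ hs2.le
    linarith
  calc s ^ 2 * (1 - T₁ / T₂) ≤ s ^ 2 * (Real.pi * (‖y‖ / s) ^ 2) := hfinal
    _ = Real.pi * ‖y‖ ^ 2 := by field_simp
    _ = Real.pi * d ^ 2 := by rw [hyd]
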